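/- For a prime power q with characteristic not 2 or 3, the number of pairs (a,b) in F_q × F_q such that 4a^3 + 27b^2 ≠ 0 is exactly q^2 - q. -/

import Mathlib

theorem stmt_0 (F : Type*) [Field F] [Fintype F]
    (h2 : ringChar F ≠ 2) (h3 : ringChar F ≠ 3) :
    Nat.card {ab : F × F | 4 * ab.1 ^ 3 + 27 * ab.2 ^ 2 ≠ 0} =
      Fintype.card F ^ 2 - Fintype.card F := by
  classical
  have h2' : (2 : F) ≠ 0 := Ring.two_ne_zero h2
  have h3' : (3 : F) ≠ 0 := by
    intro h
    have hdvd : ringChar F ∣ 3 :=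
      (CharP.cast_eq_zero_iff F (ringChar F) 3).mp (by exact_mod_cast h)
    rcases (Nat.prime_three).eq_one_or_self_of_dvd _ hdvd with h1 | h1
    · exact CharP.char_ne_one F (ringChar F) h1
    · exact h3 h1
  have h27 : (27 : F) ≠ 0 := by
    have : (27 : F) = 3 ^ 3 := by norm_num
    rw [this]; exact pow_ne_zero _ h3'
  have key : (Finset.univ.filter
      (fun ab : F × F => 4 * ab.1 ^ 3 + 27 * ab.2 ^ 2 = 0)).card = Fintype.card F := by
    rw [← Finset.card_univ]
    symm
    refine Finset.card_bij' (fun t _ => ((-3 * t ^ 2, 2 * t ^ 3) : F × F))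
      (fun p _ => -(3 * p.2) / (2 * p.1)) ?_ (fun p _ => Finset.mem_univ _) ?_ ?_
    · intro t _
      simp only [Finset.mem_filter, Finset.mem_univ, true_and]
      ring
    · intro t _
      rcases eq_or_ne t 0 with rfl | ht
      · simp
      · field_simp
    · intro p hp
      simp only [Finset.mem_filter, Finset.mem_univ, true_and] at hp
      obtain ⟨a, b⟩ := p
      simp only at hp ⊢
      rcases eq_or_ne a 0 with rfl | ha
      · have hb : b = 0 := by
          have hb2 : b ^ 2 = 0 := by
            have : (27 : F) * b ^ 2 = 0 := by linear_combination hp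
            exact (mul_eq_zero.mp this).resolve_left h27
          exact pow_eq_zero_iff (n := 2) (by norm_num) |>.mp hb2
        subst hb
        simp
      · have hb : b ≠ 0 := by
          intro hb
          subst hb
          apply ha
          have ha3 : a ^ 3 = 0 := by
            have h4 : (4 : F) ≠ 0 := by
              have : (4 : F) = 2 ^ 2 := by norm_num
              rw [this]; exact pow_ne_zero _ h2'
            have : (4 : F) * a ^ 3 = 0 := by linear_combination hp
            exact (mul_eq_zero.mp this).resolve_left h4
          exact pow_eq_zero_iff (n := 3) (by norm_num) |>.mp ha3
        rw [Prod.ext_iff]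
        constructor
        · field_simp
          linear_combination (-1 : F) * hp
        · field_simp
          linear_combination (-1 : F) * hp
  have hnc : Nat.card {ab : F × F | 4 * ab.1 ^ 3 + 27 * ab.2 ^ 2 ≠ 0} =
      (Finset.univ.filter
        (fun ab : F × F => ¬(4 * ab.1 ^ 3 + 27 * ab.2 ^ 2 = 0))).card := by
    rw [Nat.card_eq_fintype_card]
    simp [Fintype.card_subtype]
  rw [hnc]
  have htot := Finset.card_filter_add_card_filter_not
    (s := (Finset.univ : Finset (F × F)))
    (p := fun ab : F × F => 4 * ab.1 ^ 3 + 27 * ab.2 ^ 2 = 0)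
  rw [key] at htot
  have hcard : (Finset.univ : Finset (F × F)).card = Fintype.card F ^ 2 := by
    simp [Finset.card_univ, Fintype.card_prod, sq]
  omega
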